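/- Let f_N(ε) = (N-1)·(1-ε)^N - (N-2)·(1-2ε)^N and ε_N = (a_N-1)/(2a_N-1) with a_N = ((2N-2)/(N-2))^{1/(N-1)}. Then f_N(ε_N)/N converges to 1/4 as N → ∞. -/

import Mathlib

open Filter Real

/-- `a_N = ((2N-2)/(N-2))^(1/(N-1))`. -/
noncomputable def aN (N : ℕ) : ℝ :=
  ((2 * (N : ℝ) - 2) / ((N : ℝ) - 2)) ^ ((1 : ℝ) / ((N : ℝ) - 1))

/-- `ε_N = (a_N - 1)/(2a_N - 1)`, the maximizer of `f_N` on `(0, 1/2)`. -/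
noncomputable def epsN (N : ℕ) : ℝ := (aN N - 1) / (2 * aN N - 1)

/-- `f_N(ε) = (N-1)(1-ε)^N - (N-2)(1-2ε)^N`, the expected DBSCAN cluster count. -/
noncomputable def fN (N : ℕ) (ε : ℝ) : ℝ :=
  ((N : ℝ) - 1) * (1 - ε) ^ N - ((N : ℝ) - 2) * (1 - 2 * ε) ^ N

/-- General lemma: if `n * x n → c ≠ 0` then `(1 + x n)^n → exp c`. -/
lemma pow_tendsto_exp (x : ℕ → ℝ) (c : ℝ) (hc : c ≠ 0)
    (h : Tendsto (fun n : ℕ => (n : ℝ) * x n) atTop (nhds c)) :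
    Tendsto (fun n : ℕ => (1 + x n) ^ n) atTop (nhds (Real.exp c)) := by
  -- x n → 0
  have hx0 : Tendsto x atTop (nhds (0 : ℝ)) := by
    have := h.mul tendsto_one_div_atTop_nhds_zero_nat
    rw [mul_zero] at this
    refine this.congr' ?_
    filter_upwards [eventually_ge_atTop 1] with n hn
    have hn0 : (n : ℝ) ≠ 0 := by positivity
    rw [one_div, mul_comm ((n:ℝ) * x n), ← mul_assoc, inv_mul_cancel₀ hn0, one_mul]
  -- eventually x n ≠ 0
  have hxne : ∀ᶠ n in atTop, x n ≠ 0 := by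
    have : ∀ᶠ n : ℕ in atTop, (n : ℝ) * x n ≠ 0 := h.eventually_ne hc
    filter_upwards [this] with n hn hx
    exact hn (by simp [hx])
  -- eventually 1 + x n > 0
  have hpos : ∀ᶠ n in atTop, 0 < 1 + x n := by
    have := Metric.tendsto_nhds.mp hx0 1 one_pos
    filter_upwards [this] with n hn
    rw [Real.dist_eq, sub_zero] at hn
    have := abs_lt.mp hn
    linarith [this.1]
  -- slope limit: log(1+y)/y → 1 at 0
  have hlog : Tendsto (fun y : ℝ => Real.log (1 + y) / y) (nhdsWithin 0 {(0:ℝ)}ᶜ) (nhds 1) := by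
    have hd : HasDerivAt (fun y : ℝ => Real.log (1 + y)) 1 0 := by
      have h1 : HasDerivAt (fun y : ℝ => 1 + y) 1 0 := by
        simpa using (hasDerivAt_id (0:ℝ)).const_add 1
      have := (Real.hasDerivAt_log (by norm_num : (1:ℝ) + 0 ≠ 0)).comp 0 h1
      simpa [Function.comp_def] using this
    have := hasDerivAt_iff_tendsto_slope.mp hd
    refine this.congr' ?_
    filter_upwards with y
    simp [slope_def_field]
  have hxW : Tendsto x atTop (nhdsWithin 0 {(0:ℝ)}ᶜ) :=
    tendsto_nhdsWithin_of_tendsto_nhds_of_eventually_within _ hx0 hxne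
  -- n * log(1 + x n) → c
  have hnl : Tendsto (fun n : ℕ => (n : ℝ) * Real.log (1 + x n)) atTop (nhds c) := by
    have := h.mul (hlog.comp hxW)
    rw [mul_one] at this
    refine this.congr' ?_
    filter_upwards [hxne] with n hn
    simp only [Function.comp]
    rw [div_eq_mul_inv, mul_comm (Real.log (1 + x n)), mul_assoc, ← mul_assoc (x n),
      mul_inv_cancel₀ hn, one_mul]
  have := (Real.continuous_exp.tendsto c).comp hnl
  refine this.congr' ?_
  filter_upwards [hpos] with n hn
  simp only [Function.comp]
  rw [← Real.exp_log hn, ← Real.exp_nat_mul]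
  rw [Real.exp_log hn]

lemma eps_algebra (t e n : ℝ) (ht : t ≠ 0) (hd : 2 * e - 1 ≠ 0) :
    n * t * ((e - 1) / t) * (2 * e - 1)⁻¹ = n * ((e - 1) / (2 * e - 1)) := by
  field_simp

lemma cN_tendsto : Tendsto (fun N : ℕ => (2 * (N : ℝ) - 2) / ((N : ℝ) - 2)) atTop (nhds 2) := by
  have h2 : Tendsto (fun N : ℕ => (2:ℝ) / ((N : ℝ) - 2)) atTop (nhds 0) := by
    apply Tendsto.div_atTop tendsto_const_nhds
    exact tendsto_atTop_add_const_right _ _ tendsto_natCast_atTop_atTop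
  have := h2.const_add (2:ℝ)
  rw [add_zero] at this
  refine this.congr' ?_
  filter_upwards [eventually_ge_atTop 3] with N hN
  have hN' : (N : ℝ) ≥ 3 := by exact_mod_cast hN
  have : (N : ℝ) - 2 ≠ 0 := by linarith
  field_simp
  ring

/-- Key limit: `N * ε_N → log 2`. -/
lemma neps_tendsto : Tendsto (fun N : ℕ => (N : ℝ) * epsN N) atTop (nhds (Real.log 2)) := by
  set y : ℕ → ℝ := fun N => Real.log ((2 * (N : ℝ) - 2) / ((N : ℝ) - 2)) * (1 / ((N : ℝ) - 1)) with hy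
  have hlogc : Tendsto (fun N : ℕ => Real.log ((2 * (N : ℝ) - 2) / ((N : ℝ) - 2))) atTop
      (nhds (Real.log 2)) :=
    (Real.continuousAt_log (by norm_num)).tendsto.comp cN_tendsto
  have hinv : Tendsto (fun N : ℕ => 1 / ((N : ℝ) - 1)) atTop (nhds 0) :=
    Tendsto.div_atTop tendsto_const_nhds
      (tendsto_atTop_add_const_right _ _ tendsto_natCast_atTop_atTop)
  have hy0 : Tendsto y atTop (nhds 0) := by
    have := hlogc.mul hinv; rwa [mul_zero] at this
  have hny : Tendsto (fun N : ℕ => (N : ℝ) * y N) atTop (nhds (Real.log 2)) := by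
    have hr : Tendsto (fun N : ℕ => (N : ℝ) / ((N : ℝ) - 1)) atTop (nhds 1) := by
      have h1 : Tendsto (fun N : ℕ => 1 + 1 / ((N : ℝ) - 1)) atTop (nhds (1 + 0)) :=
        tendsto_const_nhds.add hinv
      rw [add_zero] at h1
      refine h1.congr' ?_
      filter_upwards [eventually_ge_atTop 2] with N hN
      have hN' : (N : ℝ) ≥ 2 := by exact_mod_cast hN
      have : (N : ℝ) - 1 ≠ 0 := by linarith
      field_simp
      ring
    have := hr.mul hlogc
    rw [one_mul] at this
    refine this.congr' ?_
    filter_upwards with N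
    simp only [hy]
    ring
  -- y N > 0 for N ≥ 3
  have hypos : ∀ᶠ N in atTop, 0 < y N := by
    filter_upwards [eventually_ge_atTop 3] with N hN
    have hN' : (N : ℝ) ≥ 3 := by exact_mod_cast hN
    have h1 : (1:ℝ) < (2 * (N : ℝ) - 2) / ((N : ℝ) - 2) := by
      rw [lt_div_iff₀ (by linarith)]
      linarith
    have hl := Real.log_pos h1
    have hi : 0 < 1 / ((N : ℝ) - 1) := by
      have h0 : (0:ℝ) < (N:ℝ) - 1 := by linarith
      positivity
    exact mul_pos hl hi
  -- aN N = exp (y N) for N ≥ 3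
  have haN : ∀ᶠ N in atTop, aN N = Real.exp (y N) := by
    filter_upwards [eventually_ge_atTop 3] with N hN
    have hN' : (N : ℝ) ≥ 3 := by exact_mod_cast hN
    have hc : (0:ℝ) < (2 * (N : ℝ) - 2) / ((N : ℝ) - 2) := by
      apply div_pos <;> linarith
    rw [aN, Real.rpow_def_of_pos hc]
  -- slope limit for exp at 0
  have hexp : Tendsto (fun t : ℝ => (Real.exp t - 1) / t) (nhdsWithin 0 {(0:ℝ)}ᶜ) (nhds 1) := by
    have hd : HasDerivAt Real.exp 1 0 := by simpa using Real.hasDerivAt_exp 0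
    have := hasDerivAt_iff_tendsto_slope.mp hd
    refine this.congr' ?_
    filter_upwards with t
    simp [slope_def_field, Real.exp_zero]
  have hyW : Tendsto y atTop (nhdsWithin 0 {(0:ℝ)}ᶜ) :=
    tendsto_nhdsWithin_of_tendsto_nhds_of_eventually_within _ hy0
      (hypos.mono fun N h => ne_of_gt h)
  have hden : Tendsto (fun N : ℕ => (2 * Real.exp (y N) - 1)⁻¹) atTop (nhds 1) := by
    have h1 : Tendsto (fun N : ℕ => 2 * Real.exp (y N) - 1) atTop (nhds 1) := by
      have := ((Real.continuous_exp.tendsto 0).comp hy0).const_mul (2:ℝ)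
      simp only [Real.exp_zero, mul_one] at this
      have := this.sub_const 1
      norm_num at this
      exact this
    have := h1.inv₀ (by norm_num)
    norm_num at this
    exact this
  have hmain : Tendsto
      (fun N : ℕ => ((N : ℝ) * y N) * ((Real.exp (y N) - 1) / y N) * (2 * Real.exp (y N) - 1)⁻¹)
      atTop (nhds (Real.log 2)) := by
    have := (hny.mul (hexp.comp hyW)).mul hden
    rw [mul_one, mul_one] at this
    exact this
  refine hmain.congr' ?_
  filter_upwards [hypos, haN] with N hpos ha
  have hyne : y N ≠ 0 := ne_of_gt hpos
  have hd : 2 * Real.exp (y N) - 1 ≠ 0 := by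
    have := Real.add_one_lt_exp (ne_of_gt hpos)
    intro h0; nlinarith
  rw [epsN, ha]
  exact eps_algebra (y N) (Real.exp (y N)) (N : ℝ) hyne hd

/-- The maximal expected number of clusters is asymptotically `N/4`:
`f_N(ε_N)/N → 1/4` as `N → ∞`. -/
theorem max_expected_clusters_asymptotics :
    Tendsto (fun N : ℕ => fN N (epsN N) / N) atTop (nhds (1 / 4 : ℝ)) := by
  have hA : Tendsto (fun N : ℕ => (1 - epsN N) ^ N) atTop (nhds (1/2 : ℝ)) := by
    have h : Tendsto (fun N : ℕ => (N : ℝ) * (-epsN N)) atTop (nhds (-Real.log 2)) := by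
      have := neps_tendsto.neg
      refine this.congr ?_
      intro N; ring
    have := pow_tendsto_exp _ _ (by
      simp only [ne_eq, neg_eq_zero]
      exact ne_of_gt (Real.log_pos one_lt_two)) h
    have he : Real.exp (-Real.log 2) = 1/2 := by
      rw [Real.exp_neg, Real.exp_log (by norm_num : (0:ℝ) < 2)]
      norm_num
    rw [he] at this
    refine this.congr ?_
    intro N
    ring_nf
  have hB : Tendsto (fun N : ℕ => (1 - 2 * epsN N) ^ N) atTop (nhds (1/4 : ℝ)) := by
    have h : Tendsto (fun N : ℕ => (N : ℝ) * (-2 * epsN N)) atTop (nhds (-2 * Real.log 2)) := by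
      have := neps_tendsto.const_mul (-2 : ℝ)
      refine this.congr ?_
      intro N; ring
    have := pow_tendsto_exp _ _ (by
      have := Real.log_pos (by norm_num : (1:ℝ) < 2)
      intro hc
      nlinarith) h
    have he : Real.exp (-2 * Real.log 2) = 1/4 := by
      rw [show (-2 : ℝ) * Real.log 2 = -(Real.log 2 + Real.log 2) by ring,
        Real.exp_neg, Real.exp_add, Real.exp_log (by norm_num : (0:ℝ) < 2)]
      norm_num
    rw [he] at this
    refine this.congr ?_
    intro N
    ring_nf
  have hr1 : Tendsto (fun N : ℕ => ((N : ℝ) - 1) / N) atTop (nhds 1) := by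
    have h1 : Tendsto (fun N : ℕ => 1 - 1 / (N : ℝ)) atTop (nhds (1 - 0)) :=
      tendsto_const_nhds.sub tendsto_one_div_atTop_nhds_zero_nat
    rw [sub_zero] at h1
    refine h1.congr' ?_
    filter_upwards [eventually_ge_atTop 1] with N hN
    have : (N : ℝ) ≠ 0 := by positivity
    field_simp
  have hr2 : Tendsto (fun N : ℕ => ((N : ℝ) - 2) / N) atTop (nhds 1) := by
    have h1 : Tendsto (fun N : ℕ => 1 - 2 / (N : ℝ)) atTop (nhds (1 - 0)) := by
      refine tendsto_const_nhds.sub ?_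
      exact Tendsto.div_atTop tendsto_const_nhds tendsto_natCast_atTop_atTop
    rw [sub_zero] at h1
    refine h1.congr' ?_
    filter_upwards [eventually_ge_atTop 1] with N hN
    have : (N : ℝ) ≠ 0 := by positivity
    field_simp
  have hmain := (hr1.mul hA).sub (hr2.mul hB)
  norm_num at hmain
  refine hmain.congr' ?_
  filter_upwards [eventually_ge_atTop 1] with N hN
  have : (N : ℝ) ≠ 0 := by positivity
  rw [fN]
  field_simp
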